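/- arXiv:2211.03172 — 4 statements merged into one kernel-verified Lean document; each statement's English description precedes it below -/
import Mathlib

section
/- Let ψ be a weight on A and ψ_k the induced weight on M_k(A) given by summing ψ over the diagonal. Then M_{ψ_k} = M_k(M_ψ), i.e., the span of the finite-weight positive matrices equals the matrices with all entries in M_ψ. -/
open scoped ENNReal
set_option linter.unusedSectionVars false

section Aux

variable {A : Type*} [NonUnitalNormedRing A] [StarRing A] [CStarRing A]
    [NormedSpace ℂ A] [IsScalarTower ℂ A A] [SMulCommClass ℂ A A]
    [StarModule ℂ A] [PartialOrder A] [StarOrderedRing A] [CompleteSpace A]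
    {ψ : A → ℝ≥0∞}

theorem aux_psi_zero
    (hhom : ∀ (t : ℝ) (a : A), 0 ≤ t → 0 ≤ a → ψ (t • a) = ENNReal.ofReal t * ψ a) :
    ψ 0 = 0 := by
  simpa using hhom 0 0 le_rfl le_rfl

theorem aux_mono (hadd : ∀ a b : A, 0 ≤ a → 0 ≤ b → ψ (a + b) = ψ a + ψ b)
    {p q : A} (hp : 0 ≤ p) (hpq : p ≤ q) : ψ p ≤ ψ q := by
  have h := hadd p (q - p) hp (sub_nonneg.mpr hpq)
  have h2 : p + (q - p) = q := by abel
  rw [h2] at h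
  rw [h]
  exact le_self_add

theorem aux_polar (hadd : ∀ a b : A, 0 ≤ a → 0 ≤ b → ψ (a + b) = ψ a + ψ b)
    {a b : A} (ha : ψ (star a * a) < ∞) (hb : ψ (star b * b) < ∞) :
    star a * b ∈ Submodule.span ℂ {x : A | 0 ≤ x ∧ ψ x < ∞} := by
  have key : ∀ c : ℂ, (starRingEnd ℂ) c * c = 1 →
      star (a + c • b) * (a + c • b) ∈ {x : A | 0 ≤ x ∧ ψ x < ∞} := by
    intro c hc
    refine ⟨star_mul_self_nonneg _, ?_⟩
    have hd : star (c • b) * (c • b) = star b * b := by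
      rw [star_smul, smul_mul_assoc, mul_smul_comm, smul_smul]
      rw [starRingEnd_apply] at hc
      rw [hc, one_smul]
    have hpar : star (a + c • b) * (a + c • b) + star (a - c • b) * (a - c • b)
        = (star a * a + star a * a) + (star b * b + star b * b) := by
      rw [← hd]
      simp only [star_add, star_sub, add_mul, mul_add, sub_mul, mul_sub]
      abel
    have h1 : ψ (star (a + c • b) * (a + c • b))
        ≤ ψ ((star a * a + star a * a) + (star b * b + star b * b)) := by
      apply aux_mono hadd (star_mul_self_nonneg _)
      rw [← hpar]
      exact le_add_of_nonneg_right (star_mul_self_nonneg _)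
    refine lt_of_le_of_lt h1 ?_
    rw [hadd _ _ (add_nonneg (star_mul_self_nonneg _) (star_mul_self_nonneg _))
        (add_nonneg (star_mul_self_nonneg _) (star_mul_self_nonneg _)),
      hadd _ _ (star_mul_self_nonneg _) (star_mul_self_nonneg _),
      hadd _ _ (star_mul_self_nonneg _) (star_mul_self_nonneg _)]
    exact ENNReal.add_lt_top.mpr ⟨ENNReal.add_lt_top.mpr ⟨ha, ha⟩,
      ENNReal.add_lt_top.mpr ⟨hb, hb⟩⟩
  have hid : star a * b =
      (4⁻¹ : ℂ) • (star (a + (1 : ℂ) • b) * (a + (1 : ℂ) • b))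
      + (-(Complex.I / 4)) • (star (a + Complex.I • b) * (a + Complex.I • b))
      + (-(4⁻¹ : ℂ)) • (star (a + (-1 : ℂ) • b) * (a + (-1 : ℂ) • b))
      + (Complex.I / 4) • (star (a + (-Complex.I) • b) * (a + (-Complex.I) • b)) := by
    simp only [star_add, star_smul, add_mul, mul_add, smul_mul_assoc, mul_smul_comm,
      smul_add, smul_smul, map_one, map_neg, Complex.conj_I, starRingEnd_apply]
    match_scalars <;> (try ring_nf) <;> (try simp [Complex.I_sq]) <;> (try norm_num)
  rw [hid]
  have h1 := key 1 (by simp)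
  have hI := key Complex.I (by simp [Complex.conj_I])
  have hm1 := key (-1) (by simp)
  have hmI := key (-Complex.I) (by simp [Complex.conj_I])
  exact Submodule.add_mem _ (Submodule.add_mem _ (Submodule.add_mem _
    (Submodule.smul_mem _ _ (Submodule.subset_span h1))
    (Submodule.smul_mem _ _ (Submodule.subset_span hI)))
    (Submodule.smul_mem _ _ (Submodule.subset_span hm1)))
    (Submodule.smul_mem _ _ (Submodule.subset_span hmI))

theorem aux_entry (hadd : ∀ a b : A, 0 ≤ a → 0 ≤ b → ψ (a + b) = ψ a + ψ b)
    {k : ℕ} (y : Matrix (Fin k) (Fin k) A)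
    (hfin : (∑ i, ψ ((star y * y) i i)) < ∞) (i j : Fin k) :
    (star y * y) i j ∈ Submodule.span ℂ {x : A | 0 ≤ x ∧ ψ x < ∞} := by
  have happ : ∀ p q : Fin k, (star y * y) p q = ∑ l, star (y l p) * y l q := by
    intro p q
    simp [Matrix.mul_apply, Matrix.conjTranspose_apply, Matrix.star_eq_conjTranspose]
  have hterm : ∀ (l p : Fin k), ψ (star (y l p) * y l p) < ∞ := by
    intro l p
    have h1 : star (y l p) * y l p ≤ (star y * y) p p := by
      rw [happ]
      exact Finset.single_le_sum (f := fun l => star (y l p) * y l p)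
        (fun l _ => star_mul_self_nonneg _) (Finset.mem_univ l)
    have h2 : ψ ((star y * y) p p) < ∞ :=
      lt_of_le_of_lt (Finset.single_le_sum (f := fun q => ψ ((star y * y) q q))
        (fun _ _ => zero_le) (Finset.mem_univ p)) hfin
    exact lt_of_le_of_lt (aux_mono hadd (star_mul_self_nonneg _) h1) h2
  rw [happ]
  exact Submodule.sum_mem _ fun l _ => aux_polar hadd (hterm l i) (hterm l j)

theorem aux_star_std {k : ℕ} (i j : Fin k) (c : A) :
    star (Matrix.single i j c) = Matrix.single j i (star c) := by
  ext p q
  simp only [Matrix.star_apply, Matrix.single, Matrix.of_apply]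
  by_cases h1 : i = q <;> by_cases h2 : j = p <;> simp [h1, h2]

theorem aux_diag
    (hhom : ∀ (t : ℝ) (a : A), 0 ≤ t → 0 ≤ a → ψ (t • a) = ENNReal.ofReal t * ψ a)
    {k : ℕ} (p : Fin k) {a : A} (ha : 0 ≤ a) (hfa : ψ a < ∞) :
    Matrix.single p p a ∈ Submodule.span ℂ
      {x : Matrix (Fin k) (Fin k) A |
        (∃ y : Matrix (Fin k) (Fin k) A, x = star y * y) ∧ (∑ i, ψ (x i i)) < ∞} := by
  letI : NonUnitalCStarAlgebra A := { }
  obtain ⟨c, hc⟩ : ∃ c : A, star c * c = a :=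
    ⟨CFC.sqrt a, by
      rw [(IsSelfAdjoint.of_nonneg (CFC.sqrt_nonneg _)).star_eq, CFC.sqrt_mul_sqrt_self a ha]⟩
  apply Submodule.subset_span
  refine ⟨⟨Matrix.single p p c, ?_⟩, ?_⟩
  · rw [aux_star_std, Matrix.single_mul_single_same, hc]
  · have h : ∀ q : Fin k, ψ (Matrix.single p p a q q) = if q = p then ψ a else 0 := by
      intro q
      by_cases hq : q = p
      · subst hq; simp
      · simp [Matrix.single, Matrix.of_apply, (Ne.symm hq : p ≠ q), hq,
          aux_psi_zero hhom]
    simp only [h, Finset.sum_ite_eq', Finset.mem_univ, if_true]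
    exact hfa

theorem aux_std (hadd : ∀ a b : A, 0 ≤ a → 0 ≤ b → ψ (a + b) = ψ a + ψ b)
    (hhom : ∀ (t : ℝ) (a : A), 0 ≤ t → 0 ≤ a → ψ (t • a) = ENNReal.ofReal t * ψ a)
    {k : ℕ} (i j : Fin k) {a : A} (ha : 0 ≤ a) (hfa : ψ a < ∞) :
    Matrix.single i j a ∈ Submodule.span ℂ
      {x : Matrix (Fin k) (Fin k) A |
        (∃ y : Matrix (Fin k) (Fin k) A, x = star y * y) ∧ (∑ i, ψ (x i i)) < ∞} := by
  by_cases hij : i = j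
  · subst hij; exact aux_diag hhom i ha hfa
  letI : NonUnitalCStarAlgebra A := { }
  obtain ⟨c, hc⟩ : ∃ c : A, star c * c = a :=
    ⟨CFC.sqrt a, by
      rw [(IsSelfAdjoint.of_nonneg (CFC.sqrt_nonneg _)).star_eq, CFC.sqrt_mul_sqrt_self a ha]⟩
  have hz₁ : star (Matrix.single i i c + Matrix.single i j c) *
      (Matrix.single i i c + Matrix.single i j c)
      = Matrix.single i i a + Matrix.single i j a
        + Matrix.single j i a + Matrix.single j j a := by
    rw [star_add, aux_star_std, aux_star_std, add_mul, mul_add, mul_add]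
    simp only [Matrix.single_mul_single_same, hc]
    abel
  have hz₂ : star (Matrix.single i i c + Matrix.single i j (Complex.I • c)) *
      (Matrix.single i i c + Matrix.single i j (Complex.I • c))
      = Matrix.single i i a + Complex.I • Matrix.single i j a
        + (-Complex.I) • Matrix.single j i a + Matrix.single j j a := by
    rw [star_add, aux_star_std, aux_star_std, add_mul, mul_add, mul_add]
    simp only [star_smul, Complex.star_def, Complex.conj_I, Matrix.single_mul_single_same,
      smul_mul_assoc, mul_smul_comm, smul_smul, smul_eq_mul, neg_mul, mul_neg, mul_one, one_mul,
      Complex.I_mul_I, neg_neg, one_smul, hc, Matrix.smul_single]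
    abel
  have hmem₁ : (Matrix.single i i a + Matrix.single i j a
        + Matrix.single j i a + Matrix.single j j a : Matrix (Fin k) (Fin k) A)
      ∈ {x : Matrix (Fin k) (Fin k) A |
        (∃ y : Matrix (Fin k) (Fin k) A, x = star y * y) ∧ (∑ i, ψ (x i i)) < ∞} := by
    refine ⟨⟨_, hz₁.symm⟩, ?_⟩
    have h : ∀ q : Fin k, ψ ((Matrix.single i i a + Matrix.single i j a
        + Matrix.single j i a + Matrix.single j j a) q q)
        = (if q = i then ψ a else 0) + (if q = j then ψ a else 0) := by
      intro q
      by_cases hqi : q = i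
      · subst hqi
        simp [Matrix.add_apply, Matrix.single, Matrix.of_apply, hij, Ne.symm hij,
          (fun h => hij h.symm : j ≠ q)]
      · by_cases hqj : q = j
        · subst hqj
          simp [Matrix.add_apply, Matrix.single, Matrix.of_apply, hij, hqi,
            Ne.symm hqi]
        · simp [Matrix.add_apply, Matrix.single, Matrix.of_apply, Ne.symm hqi,
            Ne.symm hqj, hqi, hqj, aux_psi_zero hhom]
    simp only [h, Finset.sum_add_distrib, Finset.sum_ite_eq', Finset.mem_univ, if_true]
    exact ENNReal.add_lt_top.mpr ⟨hfa, hfa⟩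
  have hmem₂ : (Matrix.single i i a + Complex.I • Matrix.single i j a
        + (-Complex.I) • Matrix.single j i a + Matrix.single j j a :
          Matrix (Fin k) (Fin k) A)
      ∈ {x : Matrix (Fin k) (Fin k) A |
        (∃ y : Matrix (Fin k) (Fin k) A, x = star y * y) ∧ (∑ i, ψ (x i i)) < ∞} := by
    refine ⟨⟨_, hz₂.symm⟩, ?_⟩
    have h : ∀ q : Fin k, ψ ((Matrix.single i i a + Complex.I • Matrix.single i j a
        + (-Complex.I) • Matrix.single j i a + Matrix.single j j a) q q)
        = (if q = i then ψ a else 0) + (if q = j then ψ a else 0) := by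
      intro q
      by_cases hqi : q = i
      · subst hqi
        simp [Matrix.add_apply, Matrix.smul_apply, Matrix.single, Matrix.of_apply,
          hij, Ne.symm hij, (fun h => hij h.symm : j ≠ q)]
      · by_cases hqj : q = j
        · subst hqj
          simp [Matrix.add_apply, Matrix.smul_apply, Matrix.single, Matrix.of_apply,
            hij, hqi, Ne.symm hqi]
        · simp [Matrix.add_apply, Matrix.smul_apply, Matrix.single, Matrix.of_apply,
            Ne.symm hqi, Ne.symm hqj, hqi, hqj, aux_psi_zero hhom]
    simp only [h, Finset.sum_add_distrib, Finset.sum_ite_eq', Finset.mem_univ, if_true]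
    exact ENNReal.add_lt_top.mpr ⟨hfa, hfa⟩
  have hfinal : Matrix.single i j a =
      (2⁻¹ : ℂ) • (Matrix.single i i a + Matrix.single i j a
        + Matrix.single j i a + Matrix.single j j a)
      + (-(Complex.I / 2)) • (Matrix.single i i a
        + Complex.I • Matrix.single i j a
        + (-Complex.I) • Matrix.single j i a + Matrix.single j j a)
      + ((Complex.I - 1) / 2) • Matrix.single i i a
      + ((Complex.I - 1) / 2) • Matrix.single j j a := by
    match_scalars <;> (try ring_nf) <;> (try simp [Complex.I_sq]) <;> (try norm_num)
  rw [hfinal]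
  refine Submodule.add_mem _ (Submodule.add_mem _ (Submodule.add_mem _
    (Submodule.smul_mem _ _ (Submodule.subset_span hmem₁))
    (Submodule.smul_mem _ _ (Submodule.subset_span hmem₂)))
    (Submodule.smul_mem _ _ (aux_diag hhom i ha hfa)))
    (Submodule.smul_mem _ _ (aux_diag hhom j ha hfa))

end Aux

/-- For a weight ψ on a C*-algebra A and the induced weight
`ψ_k(x) = ∑ i, ψ (x i i)` on `M_k(A)`, one has `M_{ψ_k} = M_k(M_ψ)`: the span
of the positive matrices of finite weight is the set of matrices all of whose
entries lie in `M_ψ = Span M_ψ⁺`. -/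
theorem weight_matrix_Mpsi
    {A : Type*} [NonUnitalNormedRing A] [StarRing A] [CStarRing A]
    [NormedSpace ℂ A] [IsScalarTower ℂ A A] [SMulCommClass ℂ A A]
    [StarModule ℂ A] [PartialOrder A] [StarOrderedRing A] [CompleteSpace A]
    (ψ : A → ℝ≥0∞)
    (hadd : ∀ a b : A, 0 ≤ a → 0 ≤ b → ψ (a + b) = ψ a + ψ b)
    (hhom : ∀ (t : ℝ) (a : A), 0 ≤ t → 0 ≤ a → ψ (t • a) = ENNReal.ofReal t * ψ a)
    (k : ℕ) :
    (Submodule.span ℂ {x : Matrix (Fin k) (Fin k) A |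
        (∃ y : Matrix (Fin k) (Fin k) A, x = star y * y) ∧ (∑ i, ψ (x i i)) < ∞} :
      Set (Matrix (Fin k) (Fin k) A)) =
    {x : Matrix (Fin k) (Fin k) A |
        ∀ i j, x i j ∈ Submodule.span ℂ {a : A | 0 ≤ a ∧ ψ a < ∞}} := by
  ext x
  simp only [SetLike.mem_coe, Set.mem_setOf_eq]
  constructor
  · intro hx
    induction hx using Submodule.span_induction with
    | mem x hx =>
      intro i j
      obtain ⟨⟨y, rfl⟩, hfin⟩ := hx
      exact aux_entry hadd y hfin i j
    | zero =>
      intro i j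
      simpa using Submodule.zero_mem (Submodule.span ℂ {a : A | 0 ≤ a ∧ ψ a < ∞})
    | add u v hu hv hu' hv' =>
      intro i j
      simpa [Matrix.add_apply] using Submodule.add_mem _ (hu' i j) (hv' i j)
    | smul c u hu hu' =>
      intro i j
      simpa [Matrix.smul_apply] using Submodule.smul_mem _ c (hu' i j)
  · intro hx
    rw [Matrix.matrix_eq_sum_single x]
    refine Submodule.sum_mem _ fun i _ => Submodule.sum_mem _ fun j _ => ?_
    refine Submodule.span_induction
      (p := fun a _ => Matrix.single i j a ∈ Submodule.span ℂ
        {x : Matrix (Fin k) (Fin k) A |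
          (∃ y : Matrix (Fin k) (Fin k) A, x = star y * y) ∧ (∑ i, ψ (x i i)) < ∞})
      (fun a hamem => aux_std hadd hhom i j hamem.1 hamem.2)
      (by simpa [Matrix.single_zero] using Submodule.zero_mem _)
      (fun u v hu hv hu' hv' => by
        simp only [Matrix.single_add]
        exact Submodule.add_mem _ hu' hv')
      (fun c u hu hu' => by
        simp only [← Matrix.smul_single]
        exact Submodule.smul_mem _ c hu')
      (hx i j)
end

section
/- Let ψ be a densely defined weight on A and define ψ̲(e) := inf{ψ_∞(f) : f a projection in some M_n(A) with f ∼ e} for projections e over A. If e, f are orthogonal projections in M_n(A) (i.e., ef = 0), then ψ̲(e+f) = ψ̲(e) + ψ̲(f). -/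
open scoped ENNReal

section

variable {A : Type*} [NonUnitalNormedRing A] [StarRing A] [CStarRing A]
    [NormedSpace ℂ A] [IsScalarTower ℂ A A] [SMulCommClass ℂ A A]
    [StarModule ℂ A] [PartialOrder A] [StarOrderedRing A] [CompleteSpace A]

/-- The diagonal extension `ψ_∞` of a weight: `ψ_k(x) = ∑ i, ψ (x i i)`. -/
noncomputable def psiDiag (ψ : A → ℝ≥0∞) {n : Type*} [Fintype n] (x : Matrix n n A) : ℝ≥0∞ :=
  ∑ i, ψ (x i i)

/-- A projection in a matrix algebra over `A`. -/
def IsProjection {n : Type*} [Fintype n] (e : Matrix n n A) : Prop :=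
  e * e = e ∧ star e = e

/-- Murray–von Neumann equivalence of projections over `A` (of possibly
different sizes), via a rectangular partial isometry. -/
def MvNEquiv {m n : Type*} [Fintype m] [Fintype n]
    (e : Matrix m m A) (f : Matrix n n A) : Prop :=
  ∃ v : Matrix m n A, v * v.conjTranspose = e ∧ v.conjTranspose * v = f

/-- `ψ̲(e)`: the infimum of `ψ_∞` over the Murray–von Neumann equivalence
class of `e` among projections in the matrix algebras `M_k(A)`, `k ∈ ℕ`. -/
noncomputable def psiLower (ψ : A → ℝ≥0∞) {m : Type*} [Fintype m]
    (e : Matrix m m A) : ℝ≥0∞ :=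
  sInf {c : ℝ≥0∞ | ∃ (k : ℕ) (f : Matrix (Fin k) (Fin k) A),
    IsProjection f ∧ MvNEquiv e f ∧ c = psiDiag ψ f}

lemma aux_eq_zero_of_mul_conjTranspose {m p : Type*} [Fintype m] [Fintype p]
    (x : Matrix m p A) (h : x * x.conjTranspose = 0) : x = 0 := by
  ext i j
  have hdiag : (x * x.conjTranspose) i i = 0 := by rw [h]; rfl
  rw [Matrix.mul_apply] at hdiag
  have hterm : ∀ k ∈ Finset.univ, (0:A) ≤ x i k * star (x i k) := fun k _ =>
    mul_star_self_nonneg _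
  have := (Finset.sum_eq_zero_iff_of_nonneg hterm).mp (by
    simpa [Matrix.conjTranspose_apply] using hdiag) j (Finset.mem_univ j)
  have hn : ‖x i j‖ * ‖x i j‖ = 0 := by
    rw [← CStarRing.norm_self_mul_star, this, norm_zero]
  have : ‖x i j‖ = 0 := by nlinarith [norm_nonneg (x i j)]
  simpa using norm_eq_zero.mp this

lemma aux_proj_mul_eq {m p : Type*} [Fintype m] [Fintype p]
    (e : Matrix m m A) (v : Matrix m p A) (he : IsProjection e)
    (hv : v * v.conjTranspose = e) : e * v = v := by
  have key : (e * v - v) * (e * v - v).conjTranspose = 0 := by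
    have hestar : e.conjTranspose = e := he.2
    have h1 : e * v * (v.conjTranspose * e) = e := by
      rw [← Matrix.mul_assoc, Matrix.mul_assoc e v, hv, he.1, he.1]
    have h2 : e * v * v.conjTranspose = e := by rw [Matrix.mul_assoc, hv, he.1]
    have h3 : v * (v.conjTranspose * e) = e := by rw [← Matrix.mul_assoc, hv, he.1]
    simp only [Matrix.conjTranspose_sub, Matrix.conjTranspose_mul, hestar,
      Matrix.sub_mul, Matrix.mul_sub, h1, h2, h3, hv]
    abel
  have := aux_eq_zero_of_mul_conjTranspose _ key
  have := sub_eq_zero.mp this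
  exact this

/-- If `g` is a projection over an arbitrary finite index type MvN-equivalent
to `e`, then `psiLower ψ e ≤ psiDiag ψ g`. -/
lemma psiLower_le_psiDiag (ψ : A → ℝ≥0∞) {m p : Type*} [Fintype m] [Fintype p]
    (e : Matrix m m A) (g : Matrix p p A) (hg : IsProjection g)
    (hequiv : MvNEquiv e g) : psiLower ψ e ≤ psiDiag ψ g := by
  obtain ⟨v, hv1, hv2⟩ := hequiv
  set σ : p ≃ Fin (Fintype.card p) := Fintype.equivFin p
  set g' : Matrix (Fin (Fintype.card p)) (Fin (Fintype.card p)) A :=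
    g.submatrix σ.symm σ.symm with hg'
  have hproj : IsProjection g' := by
    constructor
    · rw [hg', Matrix.submatrix_mul_equiv, hg.1]
    · have hst : star g' = (star g).submatrix σ.symm σ.symm := by
        ext i j
        simp [hg', Matrix.star_apply]
      rw [hst, hg.2]
  have hmv : MvNEquiv e g' := by
    refine ⟨v.submatrix id σ.symm, ?_, ?_⟩
    · rw [Matrix.conjTranspose_submatrix, Matrix.submatrix_mul_equiv, hv1,
        Matrix.submatrix_id_id]
    · rw [Matrix.conjTranspose_submatrix]
      have : (v.conjTranspose.submatrix σ.symm (id : m → m)) *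
          v.submatrix (id : m → m) σ.symm = (v.conjTranspose * v).submatrix σ.symm σ.symm := by
        have := Matrix.submatrix_mul_equiv v.conjTranspose v
          (σ.symm : Fin (Fintype.card p) → p) (Equiv.refl m) (σ.symm : Fin (Fintype.card p) → p)
        simpa using this
      rw [this, hv2]
  have hsum : psiDiag ψ g' = psiDiag ψ g := by
    simpa [psiDiag, hg'] using Equiv.sum_comp σ.symm (fun j => ψ (g j j))
  exact sInf_le ⟨Fintype.card p, g', hproj, hmv, hsum.symm⟩

lemma aux_diag_nonneg {m p : Type*} [Fintype m] [Fintype p]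
    (x : Matrix m p A) (i : p) : (0:A) ≤ (x.conjTranspose * x) i i := by
  rw [Matrix.mul_apply]
  refine Finset.sum_nonneg fun j _ => ?_
  simpa [Matrix.conjTranspose_apply] using star_mul_self_nonneg (x j i)

lemma aux_piece {m p : Type*} [Fintype m] [Fintype p] (e : Matrix m m A)
    (v : Matrix m p A) (he : IsProjection e)
    (hkey : e * (v * v.conjTranspose) * e = e) :
    IsProjection (v.conjTranspose * e * v) ∧ MvNEquiv e (v.conjTranspose * e * v) ∧
    ∀ i, (0:A) ≤ (v.conjTranspose * e * v) i i := by
  have hce : e.conjTranspose = e := he.2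
  have hu1 : (e * v) * (e * v).conjTranspose = e := by
    rw [Matrix.conjTranspose_mul, hce, ← Matrix.mul_assoc, Matrix.mul_assoc e v, hkey]
  have hu2 : (e * v).conjTranspose * (e * v) = v.conjTranspose * e * v := by
    rw [Matrix.conjTranspose_mul, hce, Matrix.mul_assoc, ← Matrix.mul_assoc e e v, he.1,
      ← Matrix.mul_assoc]
  refine ⟨⟨?_, ?_⟩, ⟨e * v, hu1, hu2⟩, ?_⟩
  · rw [← hu2, Matrix.mul_assoc ((e*v).conjTranspose) (e*v) _,
      ← Matrix.mul_assoc (e*v) ((e*v).conjTranspose) (e*v), hu1,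
      ← Matrix.mul_assoc e e v, he.1]
  · show star (v.conjTranspose * e * v) = v.conjTranspose * e * v
    simp [Matrix.star_eq_conjTranspose, Matrix.conjTranspose_mul, hce, Matrix.mul_assoc]
  · intro i
    rw [← hu2]
    exact aux_diag_nonneg _ i

lemma aux_fc_mul_fr {m n₁ n₂ p : Type*} [Fintype n₁] [Fintype n₂]
    (A₁ : Matrix m n₁ A) (A₂ : Matrix m n₂ A) (B₁ : Matrix n₁ p A) (B₂ : Matrix n₂ p A) :
    Matrix.fromCols A₁ A₂ * Matrix.fromRows B₁ B₂ = A₁ * B₁ + A₂ * B₂ := by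
  ext i j
  simp [Matrix.mul_apply, Matrix.fromCols_apply_inl, Matrix.fromCols_apply_inr, Matrix.fromRows_apply_inl, Matrix.fromRows_apply_inr, Fintype.sum_sum_type]

lemma aux_fr_mul_fc {m₁ m₂ n p₁ p₂ : Type*} [Fintype n]
    (A₁ : Matrix m₁ n A) (A₂ : Matrix m₂ n A) (B₁ : Matrix n p₁ A) (B₂ : Matrix n p₂ A) :
    Matrix.fromRows A₁ A₂ * Matrix.fromCols B₁ B₂ =
      Matrix.fromBlocks (A₁ * B₁) (A₁ * B₂) (A₂ * B₁) (A₂ * B₂) := by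
  ext (i | i) (j | j) <;>
    simp [Matrix.mul_apply, Matrix.fromRows_apply_inl, Matrix.fromRows_apply_inr, Matrix.fromCols_apply_inl, Matrix.fromCols_apply_inr, Matrix.fromBlocks]

/-- For a densely defined weight ψ on a C*-algebra A and
orthogonal projections `e, f ∈ M_n(A)`, `ψ̲(e + f) = ψ̲(e) + ψ̲(f)`. -/
theorem psiLower_add_of_orthogonal
    (ψ : A → ℝ≥0∞)
    (hadd : ∀ a b : A, 0 ≤ a → 0 ≤ b → ψ (a + b) = ψ a + ψ b)
    (hhom : ∀ (t : ℝ) (a : A), 0 ≤ t → 0 ≤ a → ψ (t • a) = ENNReal.ofReal t * ψ a)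
    (hdense : {a : A | 0 ≤ a} ⊆ closure {a : A | 0 ≤ a ∧ ψ a < ∞})
    (n : ℕ) (e f : Matrix (Fin n) (Fin n) A)
    (he : IsProjection e) (hf : IsProjection f) (hef : e * f = 0) :
    psiLower ψ (e + f) = psiLower ψ e + psiLower ψ f := by
  have hce : e.conjTranspose = e := he.2
  have hcf : f.conjTranspose = f := hf.2
  have hfe : f * e = 0 := by
    have := congrArg Matrix.conjTranspose hef
    simpa [Matrix.conjTranspose_mul, hce, hcf] using this
  apply le_antisymm
  · -- ψ̲(e+f) ≤ ψ̲(e) + ψ̲(f)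
    conv_rhs => rw [psiLower, psiLower]
    rw [ENNReal.sInf_add]
    refine le_iInf₂ fun x hx => ?_
    rw [add_comm x, ENNReal.sInf_add]
    refine le_iInf₂ fun y hy => ?_
    obtain ⟨k, e', he', hmve, rfl⟩ := hx
    obtain ⟨l, f', hf', hmvf, rfl⟩ := hy
    obtain ⟨v, hv1, hv2⟩ := hmve
    obtain ⟨w, hw1, hw2⟩ := hmvf
    have hev : e * v = v := aux_proj_mul_eq e v he hv1
    have hfw : f * w = w := aux_proj_mul_eq f w hf hw1
    have hew : e * w = 0 := by rw [← hfw, ← Matrix.mul_assoc, hef, Matrix.zero_mul]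
    have hfv : f * v = 0 := by rw [← hev, ← Matrix.mul_assoc, hfe, Matrix.zero_mul]
    have hvw : v.conjTranspose * w = 0 := by
      have hv' : v.conjTranspose = v.conjTranspose * e := by
        conv_lhs => rw [← hev]
        rw [Matrix.conjTranspose_mul, hce]
      rw [hv', Matrix.mul_assoc, hew, Matrix.mul_zero]
    have hwv : w.conjTranspose * v = 0 := by
      have hw' : w.conjTranspose = w.conjTranspose * f := by
        conv_lhs => rw [← hfw]
        rw [Matrix.conjTranspose_mul, hcf]
      rw [hw', Matrix.mul_assoc, hfv, Matrix.mul_zero]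
    set G : Matrix (Fin k ⊕ Fin l) (Fin k ⊕ Fin l) A := Matrix.fromBlocks e' 0 0 f' with hG
    set V : Matrix (Fin n) (Fin k ⊕ Fin l) A := Matrix.fromCols v w with hV
    have hVVt : V * V.conjTranspose = e + f := by
      rw [hV, Matrix.conjTranspose_fromCols_eq_fromRows_conjTranspose,
        aux_fc_mul_fr, hv1, hw1]
    have hVtV : V.conjTranspose * V = G := by
      rw [hV, Matrix.conjTranspose_fromCols_eq_fromRows_conjTranspose,
        aux_fr_mul_fc, hv2, hw2, hvw, hwv, hG]
    have hGproj : IsProjection G := by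
      constructor
      · rw [hG]
        simp [Matrix.fromBlocks_multiply, he'.1, hf'.1]
      · show star G = G
        have : star G = G.conjTranspose := rfl
        rw [this, hG, Matrix.fromBlocks_conjTranspose]
        simp [he'.2, hf'.2, show e'.conjTranspose = e' from he'.2,
          show f'.conjTranspose = f' from hf'.2]
    have hGdiag : psiDiag ψ G = psiDiag ψ e' + psiDiag ψ f' := by
      rw [psiDiag, Fintype.sum_sum_type]
      simp [psiDiag, hG]
    have hle := psiLower_le_psiDiag ψ (e + f) G hGproj ⟨V, hVVt, hVtV⟩
    rw [hGdiag] at hle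
    rw [add_comm (psiDiag ψ f') (psiDiag ψ e')]
    exact hle
  · -- ψ̲(e) + ψ̲(f) ≤ ψ̲(e+f)
    refine le_sInf fun c hc => ?_
    obtain ⟨k, g, hg, ⟨v, hv1, hv2⟩, rfl⟩ := hc
    have hkey_e : e * (v * v.conjTranspose) * e = e := by
      rw [hv1, Matrix.mul_add, he.1, hef, add_zero, he.1]
    have hkey_f : f * (v * v.conjTranspose) * f = f := by
      rw [hv1, Matrix.mul_add, hfe, hf.1, zero_add, hf.1]
    obtain ⟨hp1, hq1, hnn1⟩ := aux_piece e v he hkey_e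
    obtain ⟨hp2, hq2, hnn2⟩ := aux_piece f v hf hkey_f
    have hle1 := psiLower_le_psiDiag ψ e _ hp1 hq1
    have hle2 := psiLower_le_psiDiag ψ f _ hp2 hq2
    have hg12 : v.conjTranspose * e * v + v.conjTranspose * f * v = g := by
      rw [Matrix.mul_assoc v.conjTranspose e v, Matrix.mul_assoc v.conjTranspose f v,
        ← Matrix.mul_add, ← Matrix.add_mul, ← hv1, Matrix.mul_assoc v v.conjTranspose v,
        ← Matrix.mul_assoc v.conjTranspose v (v.conjTranspose * v), hv2, hg.1]
    have hsplit : psiDiag ψ g =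
        psiDiag ψ (v.conjTranspose * e * v) + psiDiag ψ (v.conjTranspose * f * v) := by
      rw [psiDiag, psiDiag, psiDiag, ← Finset.sum_add_distrib]
      refine Finset.sum_congr rfl fun i _ => ?_
      rw [← hadd _ _ (hnn1 i) (hnn2 i), ← Matrix.add_apply, hg12]
    rw [hsplit]
    exact add_le_add hle1 hle2

end
end

section
/- Let τ be a densely defined trace on a C*-algebra A, let d, d' ∈ A⁺ with 0 ≤ d', 0 ≤ d ≤ 1 possibly, satisfying d'·√d = √d (i.e., d' acts as a unit on √d). If d' can be approximated within 1/2 by an element x ∈ A⁺ with τ(x) < ∞, then τ(d) < ∞. In particular, if (d_n) is a sequence in A with 0 ≤ d_n ≤ 1 and d_n d_{n+1} = d_n, then d_n a d_n ∈ M_τ for every a ∈ A⁺. -/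
open scoped ENNReal

/-- Let τ be a densely defined trace on a C*-algebra A.
(1) If `d, d' ≥ 0`, `s ≥ 0` with `s * s = d` and `d' * s = s` (`d'` acts as a
unit on `√d = s`), and `d'` is within `1/2` of some `x ≥ 0` with `τ(x) < ∞`,
then `τ(d) < ∞`.
(2) In particular, if `(d_n)` satisfies `0 ≤ d_n`, `‖d_n‖ ≤ 1` and
`d_n d_{n+1} = d_n`, then `d_n a d_n ∈ M_τ` for every `a ∈ A⁺`. -/
theorem trace_finite_on_compressions
    {A : Type*} [NonUnitalNormedRing A] [StarRing A] [CStarRing A]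
    [NormedSpace ℂ A] [IsScalarTower ℂ A A] [SMulCommClass ℂ A A]
    [StarModule ℂ A] [PartialOrder A] [StarOrderedRing A] [CompleteSpace A]
    (τ : A → ℝ≥0∞)
    (hadd : ∀ a b : A, 0 ≤ a → 0 ≤ b → τ (a + b) = τ a + τ b)
    (hhom : ∀ (t : ℝ) (a : A), 0 ≤ t → 0 ≤ a → τ (t • a) = ENNReal.ofReal t * τ a)
    (htrace : ∀ a : A, τ (a * star a) = τ (star a * a))
    (hdense : {a : A | 0 ≤ a} ⊆ closure {a : A | 0 ≤ a ∧ τ a < ∞}) :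
    (∀ d d' s : A, 0 ≤ d → 0 ≤ d' → 0 ≤ s → s * s = d → d' * s = s →
      (∃ x : A, 0 ≤ x ∧ τ x < ∞ ∧ ‖x - d'‖ ≤ 1 / 2) → τ d < ∞) ∧
    (∀ d : ℕ → A, (∀ n, 0 ≤ d n ∧ ‖d n‖ ≤ 1) → (∀ n, d n * d (n + 1) = d n) →
      ∀ a : A, 0 ≤ a → ∀ n,
        d n * a * d n ∈ Submodule.span ℂ {b : A | 0 ≤ b ∧ τ b < ∞}) := by
  letI : NonUnitalCStarAlgebra A :=
    { ‹NonUnitalNormedRing A›, ‹StarRing A›, ‹CompleteSpace A›, ‹CStarRing A›,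
      ‹NormedSpace ℂ A›, ‹IsScalarTower ℂ A A›, ‹SMulCommClass ℂ A A›, ‹StarModule ℂ A› with }
  have mono : ∀ a b : A, 0 ≤ a → a ≤ b → τ a ≤ τ b := by
    intro a b ha hab
    have h := hadd a (b - a) ha (sub_nonneg.mpr hab)
    rw [add_sub_cancel] at h
    exact h ▸ le_self_add
  have part1 : ∀ d d' s : A, 0 ≤ d → 0 ≤ d' → 0 ≤ s → s * s = d → d' * s = s →
      (∃ x : A, 0 ≤ x ∧ τ x < ∞ ∧ ‖x - d'‖ ≤ 1 / 2) → τ d < ∞ := by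
    rintro d d' s hd hd' hs hss hd's ⟨x, hx, hτx, hxd'⟩
    have hs_sa : IsSelfAdjoint s := .of_nonneg hs
    have hsds : s * d' * s = d := by rw [mul_assoc, hd's, hss]
    -- key estimate : (1/2) • d ≤ s * x * s
    have hconj : s * (d' - x) * s ≤ ‖d' - x‖ • (s * s) := by
      have h := CStarAlgebra.star_left_conjugate_le_norm_smul (a := s) (b := d' - x)
        ((IsSelfAdjoint.of_nonneg hd').sub (IsSelfAdjoint.of_nonneg hx))
      rwa [hs_sa.star_eq] at h
    have hnorm : ‖d' - x‖ ≤ 1 / 2 := by rwa [norm_sub_rev] at hxd'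
    have h5 : ‖d' - x‖ • (s * s) ≤ (1 / 2 : ℝ) • d := by
      rw [hss]; exact smul_le_smul_of_nonneg_right hnorm hd
    have hsxs_eq : s * (d' - x) * s = d - s * x * s := by
      rw [mul_sub, sub_mul, hsds]
    have hmain : d - s * x * s ≤ (1 / 2 : ℝ) • d := hsxs_eq ▸ hconj.trans h5
    have h7 : d - (1 / 2 : ℝ) • d = (1 / 2 : ℝ) • d := by
      nth_rewrite 1 [← one_smul ℝ d]
      rw [← sub_smul]; norm_num
    have key : (1 / 2 : ℝ) • d ≤ s * x * s := h7 ▸ sub_le_comm.mp hmain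
    -- positivity
    have h0 : (0 : A) ≤ (1 / 2 : ℝ) • d := by
      simpa using smul_le_smul_of_nonneg_right (by norm_num : (0:ℝ) ≤ 1/2) hd
    -- τ (s * x * s) < ∞ via the trace property
    set r := CFC.sqrt x with hr
    have hr0 : (0 : A) ≤ r := CFC.sqrt_nonneg x
    have hrr : r * r = x := CFC.sqrt_mul_sqrt_self x hx
    have hr_sa : IsSelfAdjoint r := .of_nonneg hr0
    have heq1 : s * x * s = (s * r) * star (s * r) := by
      rw [star_mul, hr_sa.star_eq, hs_sa.star_eq, ← hrr]
      simp only [mul_assoc]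
    have heq2 : star (s * r) * (s * r) = r * d * r := by
      rw [star_mul, hr_sa.star_eq, hs_sa.star_eq, ← hss]
      simp only [mul_assoc]
    have hτ1 : τ (s * x * s) = τ (r * d * r) := by
      rw [heq1, htrace, heq2]
    have hrdr_le : r * d * r ≤ ‖d‖ • x := by
      have h := CStarAlgebra.star_left_conjugate_le_norm_smul (a := r) (b := d)
        (IsSelfAdjoint.of_nonneg hd)
      rwa [hr_sa.star_eq, hrr] at h
    have hrdr0 : (0 : A) ≤ r * d * r := by
      have h := star_left_conjugate_nonneg hd r; rwa [hr_sa.star_eq] at h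
    have hfin : τ (s * x * s) < ∞ := by
      rw [hτ1]
      refine lt_of_le_of_lt (mono _ _ hrdr0 hrdr_le) ?_
      rw [hhom _ _ (norm_nonneg d) hx]
      exact ENNReal.mul_lt_top ENNReal.ofReal_lt_top hτx
    have h8 : τ ((1 / 2 : ℝ) • d) ≤ τ (s * x * s) := mono _ _ h0 key
    rw [hhom _ _ (by norm_num) hd] at h8
    have hfinal : τ d ≤ ENNReal.ofReal 2 * τ (s * x * s) := by
      calc τ d = ENNReal.ofReal 2 * (ENNReal.ofReal (1 / 2) * τ d) := by
            rw [← mul_assoc, ← ENNReal.ofReal_mul (by norm_num)]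
            norm_num
        _ ≤ _ := mul_le_mul_right h8 _
    exact lt_of_le_of_lt hfinal (ENNReal.mul_lt_top ENNReal.ofReal_lt_top hfin)
  refine ⟨part1, ?_⟩
  intro d hd hstep a ha n
  have hdn := (hd n).1
  have hdn_sa : IsSelfAdjoint (d n) := .of_nonneg hdn
  have hsq0 : (0 : A) ≤ d n * d n := by
    have h := star_mul_self_nonneg (d n); rwa [hdn_sa.star_eq] at h
  have hsq : τ (d n * d n) < ∞ := by
    refine part1 (d n * d n) (d (n + 1)) (d n) hsq0 (hd (n + 1)).1 hdn rfl ?_ ?_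
    · have h := congrArg star (hstep n)
      rwa [star_mul, hdn_sa.star_eq,
        (IsSelfAdjoint.of_nonneg (hd (n + 1)).1).star_eq] at h
    · have hmem := hdense (hd (n + 1)).1
      rw [Metric.mem_closure_iff] at hmem
      obtain ⟨x, hxS, hxd⟩ := hmem (1 / 2) (by norm_num)
      refine ⟨x, hxS.1, hxS.2, ?_⟩
      rw [dist_comm, dist_eq_norm] at hxd
      exact hxd.le
  have hpos : (0 : A) ≤ d n * a * d n := by
    have h := star_left_conjugate_nonneg ha (d n); rwa [hdn_sa.star_eq] at h
  have hle : d n * a * d n ≤ ‖a‖ • (d n * d n) := by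
    have h := CStarAlgebra.star_left_conjugate_le_norm_smul (a := d n) (b := a)
      (IsSelfAdjoint.of_nonneg ha)
    rwa [hdn_sa.star_eq] at h
  have hfin : τ (d n * a * d n) < ∞ := by
    refine lt_of_le_of_lt (mono _ _ hpos hle) ?_
    rw [hhom _ _ (norm_nonneg a) hsq0]
    exact ENNReal.mul_lt_top ENNReal.ofReal_lt_top hsq
  exact Submodule.subset_span ⟨hpos, hfin⟩
end

section
/- Let τ be a densely defined trace on a C*-algebra A and let e ∈ M_k(A) be a projection. Then e ∈ M_k(M_τ); in particular τ_k(e) < ∞. -/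
open scoped ENNReal NNReal

attribute [local instance] Matrix.linftyOpNonUnitalNormedRing Matrix.linftyOpNormedSpace
  Matrix.linftyOpIsBoundedSMul

set_option maxHeartbeats 2000000
set_option synthInstance.maxHeartbeats 400000

section TauLemmas

variable {A : Type*} [NonUnitalCStarAlgebra A] [PartialOrder A] [StarOrderedRing A]
variable {τ : A → ℝ≥0∞}

lemma pti_tau_zero (hhom : ∀ (t : ℝ) (a : A), 0 ≤ t → 0 ≤ a → τ (t • a) = ENNReal.ofReal t * τ a) :
    τ 0 = 0 := by
  have h := hhom 0 0 le_rfl le_rfl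
  simpa using h

lemma pti_tau_mono (hadd : ∀ a b : A, 0 ≤ a → 0 ≤ b → τ (a + b) = τ a + τ b)
    {a b : A} (ha : 0 ≤ a) (hab : a ≤ b) : τ a ≤ τ b := by
  have h := hadd a (b - a) ha (sub_nonneg.mpr hab)
  rw [add_sub_cancel] at h
  rw [h]
  exact le_self_add

lemma pti_tau_sq (hadd : ∀ a b : A, 0 ≤ a → 0 ≤ b → τ (a + b) = τ a + τ b)
    (hhom : ∀ (t : ℝ) (a : A), 0 ≤ t → 0 ≤ a → τ (t • a) = ENNReal.ofReal t * τ a)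
    {q : A} (hq : 0 ≤ q) (hfin : τ q < ∞) : τ (q * q) < ∞ := by
  obtain ⟨r, hr0, hrq⟩ : ∃ r : A, 0 ≤ r ∧ r * r = q :=
    ⟨CFC.sqrt q, CFC.sqrt_nonneg q, CFC.sqrt_mul_sqrt_self q hq⟩
  have h := CStarAlgebra.star_left_conjugate_le_norm_smul (a := r) (b := q) (.of_nonneg hq)
  rw [(IsSelfAdjoint.of_nonneg hr0).star_eq, hrq] at h
  have hle : q * q ≤ ‖q‖ • q := by
    calc q * q = r * q * r := by rw [← hrq]; noncomm_ring
      _ ≤ ‖q‖ • q := h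
  have hqq : 0 ≤ q * q := by
    have := star_mul_self_nonneg q
    rwa [(IsSelfAdjoint.of_nonneg hq).star_eq] at this
  calc τ (q * q) ≤ τ (‖q‖ • q) := pti_tau_mono hadd hqq hle
    _ = ENNReal.ofReal ‖q‖ * τ q := hhom _ _ (norm_nonneg q) hq
    _ < ∞ := ENNReal.mul_lt_top ENNReal.ofReal_lt_top hfin

lemma pti_sum_nonneg {ι : Type*} (s : Finset ι) (f : ι → A) (hf : ∀ i ∈ s, 0 ≤ f i) :
    0 ≤ ∑ i ∈ s, f i := by
  classical
  induction s using Finset.cons_induction with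
  | empty => simp
  | cons a s ha ih =>
    rw [Finset.sum_cons]
    exact add_nonneg (hf a (Finset.mem_cons_self a s))
      (ih fun i hi => hf i (Finset.mem_cons_of_mem hi))

lemma pti_tau_sum (hadd : ∀ a b : A, 0 ≤ a → 0 ≤ b → τ (a + b) = τ a + τ b)
    (hhom : ∀ (t : ℝ) (a : A), 0 ≤ t → 0 ≤ a → τ (t • a) = ENNReal.ofReal t * τ a)
    {ι : Type*} (s : Finset ι) (f : ι → A) (hf : ∀ i ∈ s, 0 ≤ f i) :
    τ (∑ i ∈ s, f i) = ∑ i ∈ s, τ (f i) := by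
  classical
  induction s using Finset.cons_induction with
  | empty => simpa using pti_tau_zero hhom
  | cons a s ha ih =>
    rw [Finset.sum_cons, Finset.sum_cons,
      hadd _ _ (hf a (Finset.mem_cons_self a s))
        (pti_sum_nonneg s f fun i hi => hf i (Finset.mem_cons_of_mem hi)),
      ih fun i hi => hf i (Finset.mem_cons_of_mem hi)]

lemma pti_F_smul (hadd : ∀ a b : A, 0 ≤ a → 0 ≤ b → τ (a + b) = τ a + τ b)
    (hhom : ∀ (t : ℝ) (a : A), 0 ≤ t → 0 ≤ a → τ (t • a) = ENNReal.ofReal t * τ a)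
    (c : ℂ) {a : A} (ha : τ (star a * a) < ∞) : τ (star (c • a) * (c • a)) < ∞ := by
  have h1 : star (c • a) * (c • a) = (Complex.normSq c : ℝ) • (star a * a) := by
    rw [star_smul, smul_mul_assoc, mul_smul_comm, smul_smul, Complex.star_def,
      mul_comm ((starRingEnd ℂ) c) c, Complex.mul_conj, Complex.coe_smul]
  rw [h1, hhom _ _ (Complex.normSq_nonneg c) (star_mul_self_nonneg a)]
  exact ENNReal.mul_lt_top ENNReal.ofReal_lt_top ha

lemma pti_F_add (hadd : ∀ a b : A, 0 ≤ a → 0 ≤ b → τ (a + b) = τ a + τ b)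
    {a b : A} (ha : τ (star a * a) < ∞) (hb : τ (star b * b) < ∞) :
    τ (star (a + b) * (a + b)) < ∞ := by
  have hpar : star (a+b) * (a+b) + star (a-b) * (a-b)
      = (star a * a + star b * b) + (star a * a + star b * b) := by
    simp [star_add, star_sub, mul_add, add_mul, sub_mul, mul_sub]
    abel
  have h1 := hadd (star (a+b) * (a+b)) (star (a-b) * (a-b))
    (star_mul_self_nonneg _) (star_mul_self_nonneg _)
  have h3 := hadd (star a * a) (star b * b) (star_mul_self_nonneg _) (star_mul_self_nonneg _)
  have h2 := hadd (star a * a + star b * b) (star a * a + star b * b)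
    (add_nonneg (star_mul_self_nonneg _) (star_mul_self_nonneg _))
    (add_nonneg (star_mul_self_nonneg _) (star_mul_self_nonneg _))
  have key : τ (star (a+b) * (a+b)) + τ (star (a-b) * (a-b))
      = (τ (star a * a) + τ (star b * b)) + (τ (star a * a) + τ (star b * b)) := by
    rw [← h1, hpar, h2, h3]
  have hle : τ (star (a+b) * (a+b)) ≤ (τ (star a * a) + τ (star b * b))
      + (τ (star a * a) + τ (star b * b)) := key ▸ le_self_add
  exact hle.trans_lt (by
    exact ENNReal.add_lt_top.mpr ⟨ENNReal.add_lt_top.mpr ⟨ha, hb⟩,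
      ENNReal.add_lt_top.mpr ⟨ha, hb⟩⟩)

lemma pti_F_span (hadd : ∀ a b : A, 0 ≤ a → 0 ≤ b → τ (a + b) = τ a + τ b)
    (hhom : ∀ (t : ℝ) (a : A), 0 ≤ t → 0 ≤ a → τ (t • a) = ENNReal.ofReal t * τ a)
    {a : A} (h : a ∈ Submodule.span ℂ {a : A | 0 ≤ a ∧ τ a < ∞}) :
    τ (star a * a) < ∞ := by
  induction h using Submodule.span_induction with
  | mem x hx =>
    obtain ⟨hx0, hxfin⟩ := hx
    rw [(IsSelfAdjoint.of_nonneg hx0).star_eq]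
    exact pti_tau_sq hadd hhom hx0 hxfin
  | zero => simpa using (pti_tau_zero hhom) ▸ ENNReal.zero_lt_top
  | add x y _ _ hx hy => exact pti_F_add hadd hx hy
  | smul c x _ hx => exact pti_F_smul hadd hhom c hx

lemma pti_F_mul_mem (hadd : ∀ a b : A, 0 ≤ a → 0 ≤ b → τ (a + b) = τ a + τ b)
    (hhom : ∀ (t : ℝ) (a : A), 0 ≤ t → 0 ≤ a → τ (t • a) = ENNReal.ofReal t * τ a)
    (htrace : ∀ a : A, τ (a * star a) = τ (star a * a))
    {x y : A} (hx : τ (star x * x) < ∞) (hy : τ (star y * y) < ∞) :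
    x * star y ∈ Submodule.span ℂ {a : A | 0 ≤ a ∧ τ a < ∞} := by
  have hpol : x * star y = (4⁻¹ : ℂ) •
      ((x+y) * star (x+y) - (x-y) * star (x-y)
        + (Complex.I • ((x + Complex.I • y) * star (x + Complex.I • y))
          - Complex.I • ((x - Complex.I • y) * star (x - Complex.I • y)))) := by
    simp only [star_add, star_sub, star_smul, mul_add, add_mul, mul_sub, sub_mul,
      smul_add, smul_sub, smul_smul, mul_smul_comm, smul_mul_assoc,
      Complex.star_def, Complex.conj_I]
    match_scalars <;> simp [Complex.ext_iff] <;> norm_num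
  have hmem : ∀ d : A, τ (star d * d) < ∞ →
      d * star d ∈ ({a : A | 0 ≤ a ∧ τ a < ∞} : Set A) := by
    intro d hd
    refine ⟨mul_star_self_nonneg d, ?_⟩
    rw [htrace d]
    exact hd
  have h1 : τ (star (x + y) * (x + y)) < ∞ := pti_F_add hadd hx hy
  have h2 : τ (star (x - y) * (x - y)) < ∞ := by
    have : x - y = x + (-1 : ℂ) • y := by simp [sub_eq_add_neg]
    rw [this]
    exact pti_F_add hadd hx (pti_F_smul hadd hhom _ hy)
  have h3 : τ (star (x + Complex.I • y) * (x + Complex.I • y)) < ∞ :=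
    pti_F_add hadd hx (pti_F_smul hadd hhom _ hy)
  have h4 : τ (star (x - Complex.I • y) * (x - Complex.I • y)) < ∞ := by
    have : x - Complex.I • y = x + (-Complex.I) • y := by simp [sub_eq_add_neg]
    rw [this]
    exact pti_F_add hadd hx (pti_F_smul hadd hhom _ hy)
  rw [hpol]
  refine Submodule.smul_mem _ _ (Submodule.add_mem _ (Submodule.sub_mem _ ?_ ?_)
    (Submodule.sub_mem _ (Submodule.smul_mem _ _ ?_) (Submodule.smul_mem _ _ ?_)))
  · exact Submodule.subset_span (hmem _ h1)
  · exact Submodule.subset_span (hmem _ h2)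
  · exact Submodule.subset_span (hmem _ h3)
  · exact Submodule.subset_span (hmem _ h4)

lemma pti_dense
    (hdense : {a : A | 0 ≤ a} ⊆ closure {a : A | 0 ≤ a ∧ τ a < ∞})
    (a : A) (δ : ℝ) (hδ : 0 < δ) :
    ∃ b ∈ Submodule.span ℂ {a : A | 0 ≤ a ∧ τ a < ∞}, ‖a - b‖ < δ := by
  have htop : (Submodule.span ℂ {a : A | 0 ≤ a ∧ τ a < ∞}).topologicalClosure = ⊤ := by
    rw [eq_top_iff, ← CStarAlgebra.span_nonneg (A := A), Submodule.span_le]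
    intro p hp
    have h1 : p ∈ closure {a : A | 0 ≤ a ∧ τ a < ∞} := hdense hp
    have h2 : p ∈ closure (Submodule.span ℂ {a : A | 0 ≤ a ∧ τ a < ∞} : Set A) :=
      closure_mono Submodule.subset_span h1
    rwa [← Submodule.topologicalClosure_coe] at h2
  have h3 : a ∈ (Submodule.span ℂ {a : A | 0 ≤ a ∧ τ a < ∞}).topologicalClosure :=
    htop ▸ Submodule.mem_top
  have h4 : a ∈ closure (Submodule.span ℂ {a : A | 0 ≤ a ∧ τ a < ∞} : Set A) := by
    rw [← Submodule.topologicalClosure_coe]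
    exact h3
  obtain ⟨b, hb1, hb2⟩ := Metric.mem_closure_iff.mp h4 δ hδ
  exact ⟨b, hb1, by rwa [dist_eq_norm] at hb2⟩

end TauLemmas

section MatrixLemmas

variable {A : Type*} [NonUnitalCStarAlgebra A] [PartialOrder A] [StarOrderedRing A]
variable {τ : A → ℝ≥0∞} {k : ℕ}

lemma pti_diag_star_mul (m : Matrix (Fin k) (Fin k) A) (i : Fin k) :
    (star m * m) i i = ∑ l, star (m l i) * m l i := by
  simp [Matrix.mul_apply, Matrix.star_apply]

lemma pti_diag_mul_star (m : Matrix (Fin k) (Fin k) A) (i : Fin k) :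
    (m * star m) i i = ∑ l, m i l * star (m i l) := by
  simp [Matrix.mul_apply, Matrix.star_apply]

lemma pti_diag_star_mul_nonneg (m : Matrix (Fin k) (Fin k) A) (i : Fin k) :
    0 ≤ (star m * m) i i := by
  rw [pti_diag_star_mul]
  exact pti_sum_nonneg _ _ fun l _ => star_mul_self_nonneg _

lemma pti_diag_mul_star_nonneg (m : Matrix (Fin k) (Fin k) A) (i : Fin k) :
    0 ≤ (m * star m) i i := by
  rw [pti_diag_mul_star]
  exact pti_sum_nonneg _ _ fun l _ => mul_star_self_nonneg _

lemma pti_tau_diag_swap (hadd : ∀ a b : A, 0 ≤ a → 0 ≤ b → τ (a + b) = τ a + τ b)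
    (hhom : ∀ (t : ℝ) (a : A), 0 ≤ t → 0 ≤ a → τ (t • a) = ENNReal.ofReal t * τ a)
    (htrace : ∀ a : A, τ (a * star a) = τ (star a * a))
    (v : Matrix (Fin k) (Fin k) A) :
    ∑ i, τ ((star v * v) i i) = ∑ l, τ ((v * star v) l l) := by
  have h1 : ∀ i, τ ((star v * v) i i) = ∑ l, τ (star (v l i) * v l i) := by
    intro i
    rw [pti_diag_star_mul, pti_tau_sum hadd hhom _ _ fun l _ => star_mul_self_nonneg _]
  have h2 : ∀ l, τ ((v * star v) l l) = ∑ i, τ (v l i * star (v l i)) := by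
    intro l
    rw [pti_diag_mul_star, pti_tau_sum hadd hhom _ _ fun i _ => mul_star_self_nonneg _]
  simp only [h1, h2]
  rw [Finset.sum_comm]
  congr 1
  funext l
  congr 1
  funext i
  exact (htrace (v l i)).symm

lemma pti_Q_cut (hadd : ∀ a b : A, 0 ≤ a → 0 ≤ b → τ (a + b) = τ a + τ b)
    (z e : Matrix (Fin k) (Fin k) A) (hee : e * e = e) (hse : star e = e) :
    ∑ l, τ ((z * e * star (z * e)) l l) ≤ ∑ l, τ ((z * star z) l l) := by
  have hst : star (z * e) = e * star z := by rw [star_mul, hse]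
  have key : (z * e) * (e * star z) + (z - z * e) * (star z - e * star z)
      = z * star z + ((z * (e*e) * star z - z * e * star z)
        + (z * (e*e) * star z - z * e * star z)) := by noncomm_ring
  rw [hee] at key
  simp only [sub_self, add_zero] at key
  have key2 : z * star z = (z * e) * star (z * e) + (z - z * e) * star (z - z * e) := by
    rw [hst, show star (z - z * e) = star z - e * star z by rw [star_sub, hst]]
    rw [key]
  refine Finset.sum_le_sum fun l _ => ?_
  have hdiag : (z * star z) l l
      = ((z * e) * star (z * e)) l l + ((z - z * e) * star (z - z * e)) l l := by
    rw [key2]; simp [Matrix.add_apply]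
  have htau : τ ((z * star z) l l)
      = τ (((z * e) * star (z * e)) l l) + τ (((z - z * e) * star (z - z * e)) l l) := by
    rw [hdiag]
    exact hadd _ _ (pti_diag_mul_star_nonneg _ _) (pti_diag_mul_star_nonneg _ _)
  rw [htau]
  exact le_self_add

end MatrixLemmas

section FixedPoint
set_option linter.unusedSectionVars false
variable {A : Type*} [NonUnitalNormedRing A] [StarRing A] [CStarRing A]
    [NormedSpace ℂ A] [IsScalarTower ℂ A A] [SMulCommClass ℂ A A]
    [StarModule ℂ A] [PartialOrder A] [StarOrderedRing A] [CompleteSpace A]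

theorem pti_entry_norm_le {k : ℕ} (M : Matrix (Fin k) (Fin k) A) (i j : Fin k) :
    ‖M i j‖₊ ≤ ‖M‖₊ := by
  have h1 : ‖M i j‖₊ ≤ ∑ l, ‖M i l‖₊ := by
    refine Finset.single_le_sum (f := fun l => ‖M i l‖₊) ?_ (Finset.mem_univ j)
    intro l _
    exact zero_le
  have h2 : (∑ l, ‖M i l‖₊) ≤ ‖M‖₊ := by
    rw [Matrix.linfty_opNNNorm_def]
    exact Finset.le_sup (f := fun i => ∑ j, ‖M i j‖₊) (Finset.mem_univ i)
  exact h1.trans h2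

theorem pti_norm_le_of_entries {k : ℕ} (M : Matrix (Fin k) (Fin k) A) (c : ℝ≥0)
    (h : ∀ i j, ‖M i j‖₊ ≤ c) : ‖M‖₊ ≤ k * c := by
  rw [Matrix.linfty_opNNNorm_def]
  refine Finset.sup_le fun i _ => ?_
  calc ∑ j, ‖M i j‖₊ ≤ ∑ _j : Fin k, c := Finset.sum_le_sum fun j _ => h i j
    _ = k * c := by simp [mul_comm]

theorem pti_exists_w {k : ℕ} (u : Matrix (Fin k) (Fin k) A) (hu : star u = u)
    (hnorm : ‖u‖ ≤ 2⁻¹) : ∃ w : Matrix (Fin k) (Fin k) A, star w = w ∧ u = w + w - w * w := by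
  haveI : CompleteSpace (Fin k → A) :=
    (Pi.complete _ : CompleteSpace (∀ _ : Fin k, A))
  haveI : CompleteSpace (Matrix (Fin k) (Fin k) A) :=
    (Pi.complete _ : CompleteSpace (Fin k → Fin k → A))
  obtain ⟨g, hg⟩ : ∃ g : Matrix (Fin k) (Fin k) A → Matrix (Fin k) (Fin k) A,
      g = fun v => (2⁻¹ : ℝ) • (u + v * v) := ⟨_, rfl⟩
  obtain ⟨w, hw⟩ : ∃ w : ℕ → Matrix (Fin k) (Fin k) A, w = fun n => g^[n] 0 := ⟨_, rfl⟩
  have hw0 : w 0 = 0 := by rw [hw]; simp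
  have hwsucc : ∀ n, w (n+1) = g (w n) := by
    intro n; rw [hw]; exact Function.iterate_succ_apply' g n 0
  have hgval : ∀ v, ‖g v‖ = 2⁻¹ * ‖u + v * v‖ := by
    intro v
    rw [hg]
    calc ‖(2⁻¹ : ℝ) • (u + v * v)‖ = ‖(2⁻¹:ℝ)‖ * ‖u + v * v‖ := norm_smul _ _
      _ = 2⁻¹ * ‖u + v * v‖ := by norm_num
  have hgnorm : ∀ v, ‖v‖ ≤ 2⁻¹ → ‖g v‖ ≤ 2⁻¹ := by
    intro v hv
    rw [hgval]
    have h1 : ‖u + v * v‖ ≤ ‖u‖ + ‖v‖ * ‖v‖ :=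
      (norm_add_le _ _).trans (by gcongr; exact norm_mul_le _ _)
    have h2 : ‖u‖ + ‖v‖ * ‖v‖ ≤ 2⁻¹ + 2⁻¹ * 2⁻¹ := by
      have h3 : ‖v‖ * ‖v‖ ≤ 2⁻¹ * 2⁻¹ :=
        mul_le_mul hv hv (norm_nonneg v) (by norm_num)
      exact add_le_add hnorm h3
    nlinarith [norm_nonneg (u + v * v)]
  have hb : ∀ n, ‖w n‖ ≤ 2⁻¹ := by
    intro n; induction n with
    | zero => rw [hw0]; simp
    | succ n ih => rw [hwsucc]; exact hgnorm _ ih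
  have hs : ∀ n, star (w n) = w n := by
    intro n; induction n with
    | zero => rw [hw0]; simp
    | succ n ih => rw [hwsucc, hg]; simp [star_smul, star_add, star_mul, hu, ih]
  have hd : ∀ n, dist (w n) (w (n+1)) ≤ 4⁻¹ * 2⁻¹ ^ n := by
    intro n; induction n with
    | zero =>
      rw [dist_eq_norm, hwsucc, hw0]
      have : ‖g 0‖ ≤ 4⁻¹ := by
        rw [hgval]
        have : ‖(0:Matrix (Fin k) (Fin k) A) * 0‖ = 0 := by simp
        have h1 : ‖u + (0:Matrix (Fin k) (Fin k) A) * 0‖ ≤ 2⁻¹ := by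
          simpa using hnorm
        nlinarith
      simpa using this
    | succ n ih =>
      rw [dist_eq_norm] at ih ⊢
      rw [hwsucc n, hwsucc (n+1), hg]
      have key : (2⁻¹ : ℝ) • (u + w n * w n) - (2⁻¹ : ℝ) • (u + w (n+1) * w (n+1))
          = (2⁻¹ : ℝ) • (w n * (w n - w (n+1)) + (w n - w (n+1)) * w (n+1)) := by
        rw [← smul_sub]; congr 1; noncomm_ring
      rw [key]
      have e1 : ‖(2⁻¹ : ℝ) • (w n * (w n - w (n+1)) + (w n - w (n+1)) * w (n+1))‖
          = 2⁻¹ * ‖w n * (w n - w (n+1)) + (w n - w (n+1)) * w (n+1)‖ := by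
        rw [norm_smul]; norm_num
      rw [e1]
      have h1 : ‖w n * (w n - w (n+1)) + (w n - w (n+1)) * w (n+1)‖
          ≤ 2⁻¹ * ‖w n - w (n+1)‖ + ‖w n - w (n+1)‖ * 2⁻¹ := by
        refine (norm_add_le _ _).trans (add_le_add ?_ ?_)
        · exact (norm_mul_le _ _).trans (mul_le_mul_of_nonneg_right (hb n) (norm_nonneg _))
        · exact (norm_mul_le _ _).trans (mul_le_mul_of_nonneg_left (hb (n+1)) (norm_nonneg _))
      calc 2⁻¹ * ‖w n * (w n - w (n+1)) + (w n - w (n+1)) * w (n+1)‖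
          ≤ 2⁻¹ * (2⁻¹ * ‖w n - w (n+1)‖ + ‖w n - w (n+1)‖ * 2⁻¹) := by gcongr
        _ = 2⁻¹ * ‖w n - w (n+1)‖ := by ring
        _ ≤ 2⁻¹ * (4⁻¹ * 2⁻¹ ^ n) := by gcongr
        _ = 4⁻¹ * 2⁻¹ ^ (n+1) := by ring
  have hcauchy : CauchySeq w := cauchySeq_of_le_geometric 2⁻¹ 4⁻¹ (by norm_num) hd
  obtain ⟨L, hL⟩ := cauchySeq_tendsto_of_complete hcauchy
  have hgc : Continuous g := by
    rw [hg]; fun_prop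
  have hfix : g L = L := by
    have h1 : Filter.Tendsto (fun n => g (w n)) Filter.atTop (nhds (g L)) :=
      (hgc.tendsto L).comp hL
    have h2 : Filter.Tendsto (fun n => w (n+1)) Filter.atTop (nhds L) :=
      hL.comp (Filter.tendsto_add_atTop_nat 1)
    have h3 : Filter.Tendsto (fun n => w (n+1)) Filter.atTop (nhds (g L)) := by
      simpa only [← hwsucc] using h1
    exact tendsto_nhds_unique h3 h2
  have hev : ∀ i j, Continuous (fun M : Matrix (Fin k) (Fin k) A => M i j) := by
    intro i j
    refine (LipschitzWith.mk_one fun M N => ?_).continuous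
    rw [dist_eq_norm, dist_eq_norm]
    have : M i j - N i j = (M - N) i j := by simp [Matrix.sub_apply]
    rw [this]
    exact_mod_cast pti_entry_norm_le (M - N) i j
  have hsL : star L = L := by
    ext i j
    have h1 : Filter.Tendsto (fun n => w n j i) Filter.atTop (nhds (L j i)) :=
      ((hev j i).tendsto L).comp hL
    have h2 : Filter.Tendsto (fun n => star (w n j i)) Filter.atTop (nhds (star (L j i))) :=
      (continuous_star.tendsto _).comp h1
    have h3 : (fun n => star (w n j i)) = fun n => w n i j := by
      funext n
      have := hs n
      calc star (w n j i) = (star (w n)) i j := (Matrix.star_apply _ _ _).symm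
        _ = w n i j := by rw [this]
    rw [h3] at h2
    have h4 : Filter.Tendsto (fun n => w n i j) Filter.atTop (nhds (L i j)) :=
      ((hev i j).tendsto L).comp hL
    have := tendsto_nhds_unique h2 h4
    rw [Matrix.star_apply]
    exact this
  refine ⟨L, hsL, ?_⟩
  rw [hg] at hfix
  simp only at hfix
  have h5 : (2⁻¹ : ℝ) • (u + L * L) = L := hfix
  have h6 := congrArg (fun y => (2:ℝ) • y) h5
  simp only [smul_smul] at h6
  norm_num at h6
  rw [two_smul] at h6
  rw [← h6]
  abel

end FixedPoint

/-- Let τ be a densely defined trace on a C*-algebra A and let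
`e ∈ M_k(A)` be a projection.  Then `e ∈ M_k(M_τ)`, i.e. every entry of `e`
lies in `M_τ = Span {a ∈ A⁺ : τ a < ∞}`; in particular `τ_k(e) < ∞`. -/
theorem projection_entries_in_trace_ideal
    {A : Type*} [NonUnitalNormedRing A] [StarRing A] [CStarRing A]
    [NormedSpace ℂ A] [IsScalarTower ℂ A A] [SMulCommClass ℂ A A]
    [StarModule ℂ A] [PartialOrder A] [StarOrderedRing A] [CompleteSpace A]
    (τ : A → ℝ≥0∞)
    (hadd : ∀ a b : A, 0 ≤ a → 0 ≤ b → τ (a + b) = τ a + τ b)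
    (hhom : ∀ (t : ℝ) (a : A), 0 ≤ t → 0 ≤ a → τ (t • a) = ENNReal.ofReal t * τ a)
    (htrace : ∀ a : A, τ (a * star a) = τ (star a * a))
    (hdense : {a : A | 0 ≤ a} ⊆ closure {a : A | 0 ≤ a ∧ τ a < ∞})
    (k : ℕ) (e : Matrix (Fin k) (Fin k) A)
    (he : e * e = e ∧ star e = e) :
    (∀ i j, e i j ∈ Submodule.span ℂ {a : A | 0 ≤ a ∧ τ a < ∞}) ∧
      (∑ i, τ (e i i)) < ∞ := by
  classical
  letI : NonUnitalCStarAlgebra A :=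
    { ‹NonUnitalNormedRing A›, ‹StarRing A›, ‹CStarRing A›, ‹NormedSpace ℂ A›,
      ‹IsScalarTower ℂ A A›, ‹SMulCommClass ℂ A A›, ‹StarModule ℂ A›, ‹CompleteSpace A› with }
  obtain ⟨hee, hse⟩ := he
  -- abbreviations
  set E : ℝ≥0 := ‖e‖₊ with hE
  set C : ℝ≥0 := (k + k^2) * (E + 1) with hC
  set δ : ℝ≥0 := min 1 ((8 * (C + 1))⁻¹) with hδ
  have hδpos : 0 < δ := lt_min one_pos (by positivity)
  have hδ1 : δ ≤ 1 := min_le_left _ _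
  -- choose the approximating matrix z with entries in the span
  have hzex : ∀ i j : Fin k, ∃ b ∈ Submodule.span ℂ {a : A | 0 ≤ a ∧ τ a < ∞},
      ‖e i j - b‖ < (δ : ℝ) := fun i j =>
    pti_dense hdense (e i j) δ (by exact_mod_cast hδpos)
  choose z0 hz1 hz2 using hzex
  set z : Matrix (Fin k) (Fin k) A := Matrix.of z0 with hzdef
  have hzapp : ∀ i j, z i j = z0 i j := fun i j => rfl
  -- entrywise norm bounds
  have hde : ∀ i j, ‖(e - z) i j‖₊ ≤ δ := by
    intro i j
    have h := (hz2 i j).le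
    have h2 : (e - z) i j = e i j - z0 i j := by simp [Matrix.sub_apply, hzapp]
    rw [h2]
    exact_mod_cast h
  have hze : ∀ i j, ‖z i j‖₊ ≤ E + δ := by
    intro i j
    have h1 : z i j = e i j - (e - z) i j := by simp [Matrix.sub_apply]
    calc ‖z i j‖₊ = ‖e i j - (e - z) i j‖₊ := by rw [← h1]
      _ ≤ ‖e i j‖₊ + ‖(e - z) i j‖₊ := nnnorm_sub_le _ _
      _ ≤ E + δ := add_le_add (pti_entry_norm_le e i j) (hde i j)
  -- matrix norm bounds
  have hnd : ‖e - z‖₊ ≤ k * δ := pti_norm_le_of_entries _ _ hde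
  have hnds : ‖star (e - z)‖₊ ≤ k * δ := by
    refine pti_norm_le_of_entries _ _ fun i j => ?_
    rw [Matrix.star_apply, nnnorm_star]
    exact hde j i
  have hnzs : ‖star z‖₊ ≤ k * (E + δ) := by
    refine pti_norm_le_of_entries _ _ fun i j => ?_
    rw [Matrix.star_apply, nnnorm_star]
    exact hze j i
  -- the selfadjoint small element s = e - star z * z
  have hsx : star (e - star z * z) = e - star z * z := by
    rw [star_sub, hse, star_mul, star_star]
  have hsplit : e - star z * z = star (e - z) * e + star z * (e - z) := by
    have h1 : star (e - z) = e - star z := by rw [star_sub, hse]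
    rw [h1]
    have h2 : (e - star z) * e + star z * (e - z) = e * e - star z * z := by noncomm_ring
    rw [h2, hee]
  have hsn : ‖e - star z * z‖₊ ≤ 4⁻¹ := by
    have hstep : ‖e - star z * z‖₊ ≤ δ * C := by
      calc ‖e - star z * z‖₊ ≤ ‖star (e - z) * e‖₊ + ‖star z * (e - z)‖₊ := by
            rw [hsplit]; exact nnnorm_add_le _ _
        _ ≤ ‖star (e - z)‖₊ * ‖e‖₊ + ‖star z‖₊ * ‖e - z‖₊ :=
            add_le_add (nnnorm_mul_le _ _) (nnnorm_mul_le _ _)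
        _ ≤ (k * δ) * E + (k * (E + δ)) * (k * δ) := by
            refine add_le_add (mul_le_mul' hnds le_rfl) (mul_le_mul' hnzs hnd)
        _ ≤ (k * δ) * (E + 1) + (k * (E + 1)) * (k * δ) := by
            refine add_le_add (mul_le_mul' le_rfl le_self_add)
              (mul_le_mul' (mul_le_mul' le_rfl (add_le_add le_rfl hδ1)) le_rfl)
        _ = δ * ((k + k^2) * (E + 1)) := by ring
        _ = δ * C := by rw [hC]
    have hlast : δ * C ≤ 4⁻¹ := by
      calc δ * C ≤ (8 * (C + 1))⁻¹ * C := mul_le_mul' (min_le_right _ _) le_rfl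
        _ = 8⁻¹ * ((C + 1)⁻¹ * C) := by rw [mul_inv]; ring
        _ ≤ 8⁻¹ * 1 := by
            refine mul_le_mul' le_rfl ?_
            rw [mul_comm, ← div_eq_mul_inv]
            exact div_le_one_of_le₀ le_self_add zero_le
        _ ≤ 4⁻¹ := by rw [mul_one]; rw [← NNReal.coe_le_coe]; push_cast; norm_num
    exact hstep.trans hlast
  -- produce w with (e-x)+(e-x) = w + w - w*w
  have hustar : star ((e - star z * z) + (e - star z * z))
      = (e - star z * z) + (e - star z * z) := by rw [star_add, hsx]
  have hunorm : ‖(e - star z * z) + (e - star z * z)‖ ≤ 2⁻¹ := by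
    have h : ‖(e - star z * z) + (e - star z * z)‖₊ ≤ 2⁻¹ := by
      calc ‖(e - star z * z) + (e - star z * z)‖₊
          ≤ ‖e - star z * z‖₊ + ‖e - star z * z‖₊ := nnnorm_add_le _ _
        _ ≤ 4⁻¹ + 4⁻¹ := add_le_add hsn hsn
        _ = 2⁻¹ := by rw [← NNReal.coe_inj]; push_cast; norm_num
    calc ‖(e - star z * z) + (e - star z * z)‖
        = ((‖(e - star z * z) + (e - star z * z)‖₊ : ℝ≥0) : ℝ) := rfl
      _ ≤ ((2⁻¹ : ℝ≥0) : ℝ) := by exact_mod_cast h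
      _ = 2⁻¹ := by norm_num
  obtain ⟨w, hwstar, hwu⟩ := pti_exists_w ((e - star z * z) + (e - star z * z)) hustar hunorm
  -- the key algebraic identity
  have hsm : star (e - w * e) = e - e * w := by rw [star_sub, star_mul, hse, hwstar]
  have hnc : (((e - e*w) * (e - w*e) + e) - (e*(star z * z)*e + e*(star z * z)*e))
      = (e*((e - star z * z) + (e - star z * z))*e - e*(w + w - w*w)*e)
        + ((e*e + e) - (e*e*e + e*e*e)) := by noncomm_ring
  rw [hee, hee] at hnc
  have hzero : e*((e - star z * z) + (e - star z * z))*e - e*(w + w - w*w)*e = 0 := by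
    rw [hwu]
    exact sub_self _
  rw [hzero] at hnc
  simp only [sub_self, add_zero, zero_add] at hnc
  have hkey : (e - e*w) * (e - w*e) + e = e*(star z * z)*e + e*(star z * z)*e :=
    sub_eq_zero.mp hnc
  -- rewrite e x e as star (z*e) * (z*e)
  have hvx : e*(star z * z)*e = star (z * e) * (z * e) := by
    have h1 : star (z * e) = e * star z := by rw [star_mul, hse]
    rw [h1]
    noncomm_ring
  have hkey2 : star (e - w*e) * (e - w*e) + e
      = star (z * e) * (z * e) + star (z * e) * (z * e) := by
    rw [hsm, hkey, hvx]
  -- positivity of diagonal entries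
  have hEnn : ∀ i, 0 ≤ e i i := by
    intro i
    have h1 : e = star e * e := by rw [hse, hee]
    have h2 := pti_diag_star_mul_nonneg e i
    rwa [← h1] at h2
  -- per-diagonal trace inequality
  have hfin_i : ∀ i, τ (e i i)
      ≤ τ ((star (z*e) * (z*e)) i i) + τ ((star (z*e) * (z*e)) i i) := by
    intro i
    have hdiagkey : (star (e - w*e) * (e - w*e)) i i + e i i
        = (star (z*e) * (z*e)) i i + (star (z*e) * (z*e)) i i := by
      have h3 := congrFun (congrFun hkey2 i) i
      simpa [Matrix.add_apply] using h3
    have hτeq : τ ((star (e - w*e) * (e - w*e)) i i) + τ (e i i)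
        = τ ((star (z*e) * (z*e)) i i) + τ ((star (z*e) * (z*e)) i i) := by
      rw [← hadd _ _ (pti_diag_star_mul_nonneg _ _) (hEnn i), hdiagkey,
        hadd _ _ (pti_diag_star_mul_nonneg _ _) (pti_diag_star_mul_nonneg _ _)]
    calc τ (e i i) ≤ τ ((star (e - w*e) * (e - w*e)) i i) + τ (e i i) := le_add_self
      _ = _ := hτeq
  -- finiteness of the comparison quantity
  have hQfin : ∑ i, τ ((star (z*e) * (z*e)) i i) < ∞ := by
    have h3 : ∑ l, τ ((z * star z) l l) < ∞ := by
      refine ENNReal.sum_lt_top.mpr fun l _ => ?_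
      rw [pti_diag_mul_star, pti_tau_sum hadd hhom _ _ fun i _ => mul_star_self_nonneg _]
      refine ENNReal.sum_lt_top.mpr fun i _ => ?_
      rw [htrace]
      exact pti_F_span hadd hhom (hz1 l i)
    calc ∑ i, τ ((star (z*e) * (z*e)) i i)
        = ∑ l, τ (((z*e) * star (z*e)) l l) := pti_tau_diag_swap hadd hhom htrace (z*e)
      _ ≤ ∑ l, τ ((z * star z) l l) := pti_Q_cut hadd z e hee hse
      _ < ∞ := h3
  have hdiagfin : ∀ i, τ (e i i) < ∞ := by
    intro i
    have h4 : τ ((star (z*e) * (z*e)) i i) < ∞ :=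
      lt_of_le_of_lt (Finset.single_le_sum (f := fun i => τ ((star (z*e) * (z*e)) i i))
        (fun _ _ => zero_le) (Finset.mem_univ i)) hQfin
    exact lt_of_le_of_lt (hfin_i i) (ENNReal.add_lt_top.mpr ⟨h4, h4⟩)
  constructor
  · intro i j
    have hsee : star e * e = e := by rw [hse, hee]
    have hentry : ∀ i l, τ (star (e i l) * e i l) < ∞ := by
      intro i l
      have h5 : ∑ m, τ (star (e m l) * e m l) = τ (e l l) := by
        rw [← pti_tau_sum hadd hhom _ _ fun m _ => star_mul_self_nonneg _,
          ← pti_diag_star_mul e l, hsee]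
      have h6 : ∑ m, τ (star (e m l) * e m l) < ∞ := h5 ▸ hdiagfin l
      exact lt_of_le_of_lt
        (Finset.single_le_sum (f := fun m => τ (star (e m l) * e m l))
          (fun _ _ => zero_le) (Finset.mem_univ i)) h6
    have hdecomp : e i j = ∑ l, e i l * star (e j l) := by
      have h1 : e = e * star e := by rw [hse, hee]
      calc e i j = (e * star e) i j := by rw [← h1]
        _ = ∑ l, e i l * star (e j l) := by simp [Matrix.mul_apply, Matrix.star_apply]
    rw [hdecomp]
    exact Submodule.sum_mem _ fun l _ =>
      pti_F_mul_mem hadd hhom htrace (hentry i l) (hentry j l)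
  · refine lt_of_le_of_lt (Finset.sum_le_sum fun i _ => hfin_i i) ?_
    rw [Finset.sum_add_distrib]
    exact ENNReal.add_lt_top.mpr ⟨hQfin, hQfin⟩
end
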